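/- Let D = {0,1} be the two-point discrete space. Then the sequence (ℬ_n) converges in ∏_{S(H(D))} ℝ (with the product topology) to η_{H(D)}(η_D(0)); equivalently, for every continuous Φ : H(D) → ℝ and all 0 ≤ a < b ≤ 1, one has (1/(b−a)) ∫_a^b Φ(B_n(t)) dt → Φ(η_D(0)) as n → ∞. -/

import Mathlib

open scoped Topology

/-- The index set `S(X)`: triples `(φ, a, b)` with `φ : X → ℝ` continuous and
`0 ≤ a < b ≤ 1`. -/
structure SIdx (X : Type u) [TopologicalSpace X] : Type u where
  φ : C(X, ℝ)
  a : ℝ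
  b : ℝ
  ha : 0 ≤ a
  hab : a < b
  hb : b ≤ 1

/-- `α : ℝ → X` is a step function on `[0,1)`: there is a partition
`0 = t 0 < t 1 < ⋯ < t k = 1` with `α` constant on each `[t j, t (j+1))`. -/
def IsStep {X : Type u} (α : ℝ → X) : Prop :=
  ∃ (k : ℕ) (t : ℕ → ℝ), 1 ≤ k ∧ t 0 = 0 ∧ t k = 1 ∧ (∀ j < k, t j < t (j + 1)) ∧
    ∀ j < k, ∀ s ∈ Set.Ico (t j) (t (j + 1)), α s = α (t j)

/-- The embedding `e_X`, sending `α` to the point of `∏_{S(X)} ℝ` whose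
`(φ, a, b)`-coordinate is `(1/(b-a)) ∫_a^b φ(α t) dt`. -/
noncomputable def eHM {X : Type u} [TopologicalSpace X] (α : ℝ → X) : SIdx X → ℝ :=
  fun s => (1 / (s.b - s.a)) * ∫ t in s.a..s.b, s.φ (α t)

/-- `H(X)` as a subset of `∏_{S(X)} ℝ`: the closure of the image under `e_X`
of the set of step functions. -/
def HSet (X : Type u) [TopologicalSpace X] : Set (SIdx X → ℝ) :=
  closure (eHM '' {α : ℝ → X | IsStep α})

/-- `H(X)` as a topological space (subspace of the product `∏_{S(X)} ℝ`). -/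
abbrev HSp (X : Type u) [TopologicalSpace X] : Type u := ↥(HSet X)

/-- `H_X(A)`: the closure of the image under `e_X` of the step functions taking
values in `A` on `[0,1)`. -/
def HSetOn (X : Type u) [TopologicalSpace X] (A : Set X) : Set (SIdx X → ℝ) :=
  closure (eHM '' {α : ℝ → X | IsStep α ∧ ∀ t ∈ Set.Ico (0:ℝ) 1, α t ∈ A})

/-- The support of `ν`: the intersection of all closed `A ⊆ X` with `ν ∈ H_X(A)`. -/
def suppH {X : Type u} [TopologicalSpace X] (ν : SIdx X → ℝ) : Set X :=
  ⋂₀ {A : Set X | IsClosed A ∧ ν ∈ HSetOn X A}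

/-- The reindexing map `R_f : ∏_{S(X)} ℝ → ∏_{S(Y)} ℝ`, `R_f x (ψ,a,b) = x (ψ∘f,a,b)`. -/
def reindex {X : Type u} {Y : Type v} [TopologicalSpace X] [TopologicalSpace Y]
    (f : C(X, Y)) : (SIdx X → ℝ) → (SIdx Y → ℝ) :=
  fun x s => x ⟨s.φ.comp f, s.a, s.b, s.ha, s.hab, s.hb⟩

lemma isStep_comp {X : Type u} {Y : Type v} (f : X → Y) {α : ℝ → X} (h : IsStep α) :
    IsStep (f ∘ α) := by
  obtain ⟨k, t, hk, h0, h1, hm, hc⟩ := h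
  exact ⟨k, t, hk, h0, h1, hm, fun j hj s hs => congrArg f (hc j hj s hs)⟩

lemma isStep_const {X : Type u} (x : X) : IsStep (fun _ : ℝ => x) :=
  ⟨1, fun j => (j : ℝ), le_refl 1, by simp, by simp,
    fun j _ => by simp, fun _ _ _ _ => rfl⟩

/-- The point `e_X(α)` of `H(X)`, for a step function `α`. -/
noncomputable def toH {X : Type u} [TopologicalSpace X] (α : ℝ → X) (h : IsStep α) : HSp X :=
  ⟨eHM α, subset_closure ⟨α, h, rfl⟩⟩

lemma continuous_reindex {X : Type u} {Y : Type v} [TopologicalSpace X] [TopologicalSpace Y]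
    (f : C(X, Y)) : Continuous (reindex f) :=
  continuous_pi fun _ => continuous_apply _

lemma reindex_mapsTo {X : Type u} {Y : Type v} [TopologicalSpace X] [TopologicalSpace Y]
    (f : C(X, Y)) : Set.MapsTo (reindex f) (HSet X) (HSet Y) := by
  intro x hx
  have h2 := image_closure_subset_closure_image (s := eHM '' {α : ℝ → X | IsStep α})
    (continuous_reindex f)
  have h3 : reindex f '' (eHM '' {α : ℝ → X | IsStep α}) ⊆ eHM '' {α : ℝ → Y | IsStep α} := by
    rintro _ ⟨_, ⟨α, hα, rfl⟩, rfl⟩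
    exact ⟨f ∘ α, isStep_comp f hα, rfl⟩
  exact closure_mono h3 (h2 ⟨x, hx, rfl⟩)

/-- The map `H(f) : H(X) → H(Y)` induced by a continuous `f : X → Y`, i.e. the
restriction of the reindexing map `R_f`. -/
noncomputable def Hmap {X : Type u} {Y : Type v} [TopologicalSpace X] [TopologicalSpace Y]
    (f : C(X, Y)) : C(HSp X, HSp Y) where
  toFun x := ⟨reindex f x.1, reindex_mapsTo f x.2⟩
  continuous_toFun :=
    Continuous.subtype_mk ((continuous_reindex f).comp continuous_subtype_val) _

/-- The unit `η_X : X → H(X)`, `x ↦ e_X(const x)`. -/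
noncomputable def etaMap (X : Type u) [TopologicalSpace X] : C(X, HSp X) where
  toFun x := toH (fun _ : ℝ => x) (isStep_const x)
  continuous_toFun := by
    refine Continuous.subtype_mk (continuous_pi fun s => ?_) _
    simp only [eHM, intervalIntegral.integral_const]
    exact continuous_const.mul ((s.φ.continuous).const_smul (s.b - s.a))
/-- The index (0-based) of the subinterval `[i/n, (i+1)/n)` of `[0,1)` containing `s`
(as a natural number, clipped to `n - 1`). -/
noncomputable def stepIdxNat (n : ℕ) (s : ℝ) : ℕ := min ⌊s * n⌋₊ (n - 1)

lemma stepIdxNat_eq {n j : ℕ} (hj : j < n) {s : ℝ}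
    (h1 : (j : ℝ) / n ≤ s) (h2 : s < ((j : ℝ) + 1) / n) : stepIdxNat n s = j := by
  have hn : (0:ℝ) < n := by
    have : 0 < n := by omega
    exact_mod_cast this
  have h1' : (j : ℝ) ≤ s * n := by rw [div_le_iff₀ hn] at h1; exact h1
  have h2' : s * n < (j : ℝ) + 1 := by rw [lt_div_iff₀ hn] at h2; exact h2
  have hfl : ⌊s * n⌋₊ = j := by
    rw [Nat.floor_eq_iff (le_trans (Nat.cast_nonneg j) h1')]
    exact ⟨h1', h2'⟩
  unfold stepIdxNat
  omega

lemma isStep_stepIdxNat (n : ℕ) : IsStep (stepIdxNat n) := by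
  rcases Nat.eq_zero_or_pos n with rfl | hn
  · exact ⟨1, fun j => (j : ℝ), le_refl 1, by simp, by simp, fun j _ => by simp,
      fun j hj s hs => by simp [stepIdxNat]⟩
  · have hnR : (0:ℝ) < n := by exact_mod_cast hn
    refine ⟨n, fun j => (j : ℝ) / n, hn, by simp, by field_simp,
      fun j hj => ?_, fun j hj s hs => ?_⟩
    · exact (div_lt_div_iff_of_pos_right hnR).mpr (by push_cast; linarith)
    · obtain ⟨hs1, hs2⟩ := hs
      have hs2' : s < ((j : ℝ) + 1) / n := by
        convert hs2 using 2 <;> first | rfl | (push_cast; ring)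
      rw [stepIdxNat_eq hj hs1 hs2',
        stepIdxNat_eq hj (le_refl _) ((div_lt_div_iff_of_pos_right hnR).mpr (by linarith))]
/-- The step function `β : [0,1) → K_n`, `β(s) = i` for `s ∈ [i/n, (i+1)/n)`,
with `K_n` realized as `Fin n` (0-based indexing). -/
noncomputable def stepIdx (n : ℕ) [NeZero n] (s : ℝ) : Fin n :=
  ⟨stepIdxNat n s, by
    have := NeZero.ne n
    unfold stepIdxNat
    omega⟩

lemma isStep_stepIdx (n : ℕ) [NeZero n] : IsStep (stepIdx n) := by
  have hn := NeZero.ne n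
  have h : stepIdx n =
      (fun m : ℕ => (⟨min m (n - 1), by omega⟩ : Fin n)) ∘ stepIdxNat n := by
    funext s
    apply Fin.ext
    simp [stepIdx, stepIdxNat, min_assoc]
  rw [h]
  exact isStep_comp _ (isStep_stepIdxNat n)

/-- The diagonal step function `α : [0,1) → K_n × K_n`, `α(s) = (i,i)` for
`s ∈ [i/n, (i+1)/n)`. -/
noncomputable def alphaDiag (n : ℕ) [NeZero n] : ℝ → Fin n × Fin n :=
  fun s => (stepIdx n s, stepIdx n s)

lemma isStep_alphaDiag (n : ℕ) [NeZero n] : IsStep (alphaDiag n) :=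
  isStep_comp (fun i : Fin n => (i, i)) (isStep_stepIdx n)

/-- The step function `α_i : [0,1) → K_n × K_n`, `α_i(s) = (i,j)` for
`s ∈ [j/n, (j+1)/n)`. -/
noncomputable def alphaRow (n : ℕ) [NeZero n] (i : Fin n) : ℝ → Fin n × Fin n :=
  fun s => (i, stepIdx n s)

lemma isStep_alphaRow (n : ℕ) [NeZero n] (i : Fin n) : IsStep (alphaRow n i) :=
  isStep_comp (fun j : Fin n => (i, j)) (isStep_stepIdx n)

/-- The step function `A_n : [0,1) → H(K_n × K_n)`, `A_n(s) = e(α_i)` for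
`s ∈ [i/n, (i+1)/n)`. -/
noncomputable def An (n : ℕ) [NeZero n] : ℝ → HSp (Fin n × Fin n) :=
  fun s => toH (alphaRow n (stepIdx n s)) (isStep_alphaRow n _)

lemma isStep_An (n : ℕ) [NeZero n] : IsStep (An n) :=
  isStep_comp (fun i : Fin n => toH (alphaRow n i) (isStep_alphaRow n i)) (isStep_stepIdx n)

/-- The step function `γ_i^{(n)} : [0,1) → D = {0,1}` which is `1` on
`[i/n, (i+1)/n)` and `0` elsewhere, with `D` realized as `Bool`. -/
noncomputable def gammaStep (n i : ℕ) : ℝ → Bool := fun s => decide (stepIdxNat n s = i)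

lemma isStep_gammaStep (n i : ℕ) : IsStep (gammaStep n i) :=
  isStep_comp (fun m : ℕ => decide (m = i)) (isStep_stepIdxNat n)

/-- The step function `B_n : [0,1) → H(D)`, `B_n(s) = e(γ_i^{(n)})` for
`s ∈ [i/n, (i+1)/n)`. -/
noncomputable def Bn (n : ℕ) : ℝ → HSp Bool :=
  fun s => toH (gammaStep n (stepIdxNat n s)) (isStep_gammaStep n _)

lemma isStep_Bn (n : ℕ) : IsStep (Bn n) :=
  isStep_comp (fun m : ℕ => toH (gammaStep n m) (isStep_gammaStep n m)) (isStep_stepIdxNat n)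


open MeasureTheory in
lemma measurable_stepIdxNat (n : ℕ) : Measurable (stepIdxNat n) := by
  unfold stepIdxNat
  exact (Nat.measurable_floor.comp (measurable_id.mul_const _)).min measurable_const

lemma stepIdxNat_sandwich {n i : ℕ} (hn : 1 ≤ n) {t : ℝ} (ht0 : 0 < t) (ht1 : t ≤ 1)
    (h : stepIdxNat n t = i) : (i : ℝ) / n ≤ t ∧ t ≤ ((i : ℝ) + 1) / n := by
  have hnR : (0:ℝ) < n := by exact_mod_cast hn
  have htn : (0:ℝ) ≤ t * n := by positivity
  by_cases hf : ⌊t * n⌋₊ ≤ n - 1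
  · have hi : i = ⌊t * n⌋₊ := by unfold stepIdxNat at h; omega
    subst hi
    constructor
    · rw [div_le_iff₀ hnR]
      exact Nat.floor_le htn
    · rw [le_div_iff₀ hnR]
      exact le_of_lt (Nat.lt_floor_add_one _)
  · have hi : i = n - 1 := by unfold stepIdxNat at h; omega
    subst hi
    have hge : (n : ℝ) ≤ t * n := by
      have : n ≤ ⌊t * n⌋₊ := by omega
      exact_mod_cast le_trans (Nat.cast_le.mpr this) (Nat.floor_le htn)
    have ht1' : (1:ℝ) ≤ t := by
      nlinarith
    have hcast : ((n - 1 : ℕ) : ℝ) = (n : ℝ) - 1 := by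
      have := Nat.cast_sub hn (R := ℝ); simpa using this
    constructor
    · rw [div_le_iff₀ hnR, hcast]
      nlinarith
    · rw [le_div_iff₀ hnR, hcast]
      nlinarith

open MeasureTheory in
lemma gamma_close (x : SIdx Bool) {n : ℕ} (hn : 1 ≤ n) (i : ℕ) :
    |eHM (gammaStep n i) x - eHM (fun _ : ℝ => false) x|
      ≤ (1 / (x.b - x.a)) * |x.φ true - x.φ false| / n := by
  obtain ⟨φ, a, b, ha, hab, hb⟩ := x
  simp only [eHM] at *
  have hnR : (0:ℝ) < n := by exact_mod_cast hn
  set S : Set ℝ := stepIdxNat n ⁻¹' {i} with hSdef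
  have hS : MeasurableSet S := measurable_stepIdxNat n (measurableSet_singleton i)
  set Δ : ℝ := φ true - φ false with hΔ
  have hfun : (fun t => φ (gammaStep n i t)) =
      fun t => φ false + Δ * S.indicator (fun _ => (1:ℝ)) t := by
    funext t
    by_cases h : stepIdxNat n t = i
    · simp [gammaStep, h, Set.indicator, hSdef, hΔ]
    · simp [gammaStep, h, Set.indicator, hSdef, hΔ]
  have hind : IntegrableOn (fun t => Δ * S.indicator (fun _ => (1:ℝ)) t)
      (Set.Ioc a b) volume := by
    have : IntegrableOn (S.indicator (fun _ => (1:ℝ))) (Set.Ioc a b) volume := by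
      have h1 : IntegrableOn (fun _ : ℝ => (1:ℝ)) (Set.Ioc a b) volume := by
        apply (integrableOn_const_iff).mpr
        right
        simp [Real.volume_Ioc]
      exact h1.integrable.indicator hS
    exact this.const_mul Δ
  have hint : (∫ t in a..b, φ (gammaStep n i t))
      = (b - a) * φ false + Δ * (volume (Set.Ioc a b ∩ S)).toReal := by
    rw [hfun, intervalIntegral.integral_of_le (le_of_lt hab)]
    rw [integral_add ((integrableOn_const_iff (C := φ false) (s := Set.Ioc a b) (μ := volume)).mpr (Or.inr (by simp [Real.volume_Ioc]))) hind]
    rw [integral_const_mul, setIntegral_indicator hS, setIntegral_const, setIntegral_const]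
    simp [Real.volume_Ioc, hab.le, smul_eq_mul, mul_comm, Measure.real]
  have hsub : Set.Ioc a b ∩ S ⊆ Set.Icc ((i:ℝ)/n) (((i:ℝ)+1)/n) := by
    rintro t ⟨⟨ht1, ht2⟩, htS⟩
    have ht0 : 0 < t := lt_of_le_of_lt ha ht1
    have ht1' : t ≤ 1 := le_trans ht2 hb
    exact stepIdxNat_sandwich hn ht0 ht1' htS
  have hvol : (volume (Set.Ioc a b ∩ S)).toReal ≤ 1 / n := by
    have h1 : volume (Set.Ioc a b ∩ S) ≤ volume (Set.Icc ((i:ℝ)/n) (((i:ℝ)+1)/n)) :=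
      measure_mono hsub
    have h2 : volume (Set.Icc ((i:ℝ)/n) (((i:ℝ)+1)/n)) = ENNReal.ofReal (1/n) := by
      rw [Real.volume_Icc]
      congr 1
      field_simp
      ring
    rw [h2] at h1
    calc (volume (Set.Ioc a b ∩ S)).toReal ≤ (ENNReal.ofReal (1/n)).toReal :=
          ENNReal.toReal_mono (by simp) h1
      _ = 1/n := ENNReal.toReal_ofReal (by positivity)
  have hba : (0:ℝ) < b - a := by linarith
  have hconst : (∫ t in a..b, φ ((fun _ : ℝ => false) t)) = (b - a) * φ false := by
    simp [mul_comm]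
  rw [hint, hconst]
  have : 1 / (b - a) * ((b - a) * φ false + Δ * (volume (Set.Ioc a b ∩ S)).toReal)
      - 1 / (b - a) * ((b - a) * φ false)
      = 1 / (b - a) * (Δ * (volume (Set.Ioc a b ∩ S)).toReal) := by ring
  rw [this, abs_mul, abs_mul]
  have h0 : (0:ℝ) ≤ (volume (Set.Ioc a b ∩ S)).toReal := ENNReal.toReal_nonneg
  have hb1 : |1 / (b - a)| = 1 / (b - a) := abs_of_pos (by positivity)
  rw [hb1, abs_of_nonneg h0]
  rw [div_eq_mul_one_div (1 / (b - a) * |Δ|) (n:ℝ)]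
  have := mul_le_mul_of_nonneg_left hvol (abs_nonneg Δ)
  calc 1 / (b - a) * (|Δ| * (volume (Set.Ioc a b ∩ S)).toReal)
      ≤ 1 / (b - a) * (|Δ| * (1/n)) := by
        apply mul_le_mul_of_nonneg_left _ (by positivity)
        exact this
    _ = 1 / (b - a) * |Δ| * (1/n) := by ring

lemma key_unif (Φ : C(HSp Bool, ℝ)) {ε : ℝ} (hε : 0 < ε) :
    ∀ᶠ n : ℕ in Filter.atTop, ∀ i : ℕ,
      |Φ (toH (gammaStep n i) (isStep_gammaStep n i)) - Φ (etaMap Bool false)| < ε := by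
  set q0 : HSp Bool := etaMap Bool false with hq0
  have hval : (q0 : SIdx Bool → ℝ) = eHM (fun _ : ℝ => false) := rfl
  have hP : Φ ⁻¹' Metric.ball (Φ q0) ε ∈ nhds q0 :=
    Φ.continuous.continuousAt.preimage_mem_nhds (Metric.ball_mem_nhds _ hε)
  rw [mem_nhds_subtype] at hP
  obtain ⟨W, hW, hWP⟩ := hP
  rw [nhds_pi, Filter.mem_pi] at hW
  obtain ⟨I, hIfin, V, hV, hVW⟩ := hW
  have hεx : ∀ x : SIdx Bool, ∃ δ > 0, Metric.ball ((q0 : SIdx Bool → ℝ) x) δ ⊆ V x :=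
    fun x => Metric.mem_nhds_iff.mp (hV x)
  choose δ hδpos hδsub using hεx
  have hev : ∀ᶠ n : ℕ in Filter.atTop, ∀ x ∈ I,
      (1 / (x.b - x.a)) * |x.φ true - x.φ false| / (n : ℝ) < δ x := by
    rw [Filter.eventually_all_finite hIfin]
    intro x _
    have := tendsto_const_div_atTop_nhds_zero_nat ((1 / (x.b - x.a)) * |x.φ true - x.φ false|)
    exact this.eventually_lt_const (hδpos x)
  filter_upwards [hev, Filter.eventually_ge_atTop 1] with n hn hn1 i
  have hmem : (toH (gammaStep n i) (isStep_gammaStep n i) : SIdx Bool → ℝ) ∈ W := by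
    apply hVW
    intro x hx
    apply hδsub x
    rw [Metric.mem_ball, Real.dist_eq, hval]
    calc |eHM (gammaStep n i) x - eHM (fun _ : ℝ => false) x|
        ≤ (1 / (x.b - x.a)) * |x.φ true - x.φ false| / n := gamma_close x hn1 i
      _ < δ x := hn x hx
  have := hWP hmem
  simpa [Real.dist_eq] using this

open MeasureTheory in
lemma intervalIntegrable_comp_Bn (Φ : C(HSp Bool, ℝ)) (n : ℕ) (a b : ℝ) :
    IntervalIntegrable (fun t => Φ (Bn n t)) volume a b := by
  set G : ℕ → ℝ := fun m => Φ (toH (gammaStep n m) (isStep_gammaStep n m)) with hG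
  have hfun : (fun t => Φ (Bn n t)) = fun t => G (stepIdxNat n t) := rfl
  rw [hfun]
  set C : ℝ := (Finset.range (n+1)).sup' ⟨0, by simp⟩ (fun m => |G m|) with hC
  have hbound : ∀ t : ℝ, ‖G (stepIdxNat n t)‖ ≤ C := by
    intro t
    have hmem : stepIdxNat n t ∈ Finset.range (n+1) := by
      simp only [Finset.mem_range]
      unfold stepIdxNat
      omega
    rw [Real.norm_eq_abs]
    exact Finset.le_sup' (fun m => |G m|) hmem
  rw [intervalIntegrable_iff]
  have hconst : IntegrableOn (fun _ : ℝ => C) (Set.uIoc a b) volume :=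
    (intervalIntegrable_iff.mp (intervalIntegrable_const (c := C)))
  apply hconst.integrable.mono'
  · exact (((measurable_from_nat (f := G)).comp (measurable_stepIdxNat n)).aestronglyMeasurable)
  · exact Filter.Eventually.of_forall fun t => hbound t

/-- The sequence `ℬ_n = e_{H(D)}(B_n)` converges in `∏_{S(H(D))} ℝ` to
`η_{H(D)}(η_D(0))`, with `D = {0,1}` realized as `Bool` (`0 = false`). -/
theorem Bn_tendsto_eta_eta_zero :
    Filter.Tendsto (fun n : ℕ => eHM (Bn n)) Filter.atTop
      (nhds (eHM (fun _ : ℝ => etaMap Bool false))) := by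
  rw [tendsto_pi_nhds]
  intro s
  rw [Metric.tendsto_nhds]
  intro ε hε
  set q0 : HSp Bool := etaMap Bool false with hq0
  set c : ℝ := s.φ q0 with hc
  have hba : (0:ℝ) < s.b - s.a := by linarith [s.hab]
  filter_upwards [key_unif s.φ (half_pos hε)] with n hn
  have hbd : ∀ t ∈ Set.uIoc s.a s.b, ‖s.φ (Bn n t) - c‖ ≤ ε / 2 := by
    intro t _
    have := hn (stepIdxNat n t)
    rw [Real.norm_eq_abs]
    exact le_of_lt this
  have hint : IntervalIntegrable (fun t => s.φ (Bn n t)) MeasureTheory.volume s.a s.b :=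
    intervalIntegrable_comp_Bn s.φ n s.a s.b
  have hsplit : (∫ t in s.a..s.b, s.φ (Bn n t)) - (s.b - s.a) * c
      = ∫ t in s.a..s.b, (s.φ (Bn n t) - c) := by
    rw [intervalIntegral.integral_sub hint intervalIntegrable_const]
    simp [mul_comm]
  have hnorm : |(∫ t in s.a..s.b, (s.φ (Bn n t) - c))| ≤ ε / 2 * |s.b - s.a| :=
    intervalIntegral.norm_integral_le_of_norm_le_const hbd
  have htgt : eHM (fun _ : ℝ => q0) s = 1 / (s.b - s.a) * ((s.b - s.a) * c) := by
    simp [eHM, smul_eq_mul, mul_comm]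
    exact Or.inl rfl
  rw [Real.dist_eq]
  have hlhs : eHM (Bn n) s = 1 / (s.b - s.a) * ∫ t in s.a..s.b, s.φ (Bn n t) := rfl
  rw [hlhs, htgt]
  have : 1 / (s.b - s.a) * (∫ t in s.a..s.b, s.φ (Bn n t))
      - 1 / (s.b - s.a) * ((s.b - s.a) * c)
      = 1 / (s.b - s.a) * ((∫ t in s.a..s.b, s.φ (Bn n t)) - (s.b - s.a) * c) := by ring
  rw [this, hsplit, abs_mul, abs_of_pos (show (0:ℝ) < 1/(s.b - s.a) by positivity)]
  calc 1 / (s.b - s.a) * |∫ t in s.a..s.b, (s.φ (Bn n t) - c)|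
      ≤ 1 / (s.b - s.a) * (ε / 2 * |s.b - s.a|) := by
        apply mul_le_mul_of_nonneg_left hnorm (by positivity)
    _ = ε / 2 := by rw [abs_of_pos hba]; field_simp
    _ < ε := by linarith
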